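/- Sylvester–Gallai theorem: every finite set of points in ℝ², not all collinear, has a line passing through exactly two of the points. -/

import Mathlib

/-- `v` and `w` are visible with respect to `P`: they are distinct and no point of `P`
lies in the open segment between them. -/
def Visible (P : Set (ℝ × ℝ)) (v w : ℝ × ℝ) : Prop :=
  v ≠ w ∧ ∀ p ∈ P, p ∉ openSegment ℝ v w

/-- `P` contains no 4 collinear points. -/
def No4Collinear (P : Set (ℝ × ℝ)) : Prop :=
  ∀ a ∈ P, ∀ b ∈ P, ∀ c ∈ P, ∀ d ∈ P,
    a ≠ b → a ≠ c → a ≠ d → b ≠ c → b ≠ d → c ≠ d →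
    ¬ Collinear ℝ ({a, b, c, d} : Set (ℝ × ℝ))

/-- Cross product / twice signed area of triangle `a b c`. -/
def cross (a b c : ℝ × ℝ) : ℝ :=
  (b.1 - a.1) * (c.2 - a.2) - (b.2 - a.2) * (c.1 - a.1)

/-- Squared euclidean distance. -/
def d2 (a b : ℝ × ℝ) : ℝ := (b.1 - a.1) ^ 2 + (b.2 - a.2) ^ 2

lemma d2_pos {a b : ℝ × ℝ} (h : a ≠ b) : 0 < d2 a b := by
  have h' : b.1 - a.1 ≠ 0 ∨ b.2 - a.2 ≠ 0 := by
    by_contra hc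
    push_neg at hc
    exact h (Prod.ext (by linarith [hc.1]) (by linarith [hc.2]))
  unfold d2
  rcases h' with h' | h' <;>
    [ nlinarith [lt_of_le_of_ne (sq_nonneg (b.1 - a.1)) (Ne.symm (pow_ne_zero 2 h')),
        sq_nonneg (b.2 - a.2)];
      nlinarith [lt_of_le_of_ne (sq_nonneg (b.2 - a.2)) (Ne.symm (pow_ne_zero 2 h')),
        sq_nonneg (b.1 - a.1)]]

lemma cross_ne_zero_ne {a b c : ℝ × ℝ} (h : cross a b c ≠ 0) : a ≠ b := by
  rintro rfl
  apply h
  simp [cross]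

lemma exists_param {a b x : ℝ × ℝ} (hab : a ≠ b) (h : cross a b x = 0) :
    ∃ t : ℝ, x.1 - a.1 = t * (b.1 - a.1) ∧ x.2 - a.2 = t * (b.2 - a.2) := by
  have hu : b.1 - a.1 ≠ 0 ∨ b.2 - a.2 ≠ 0 := by
    by_contra hc
    push_neg at hc
    exact hab (Prod.ext (by linarith [hc.1]) (by linarith [hc.2]))
  unfold cross at h
  rcases hu with hu | hu
  · refine ⟨(x.1 - a.1) / (b.1 - a.1), by field_simp, ?_⟩
    field_simp
    nlinarith [h]
  · refine ⟨(x.2 - a.2) / (b.2 - a.2), ?_, by field_simp⟩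
    field_simp
    nlinarith [h]

lemma cross_eq_zero_of_collinear {a b c : ℝ × ℝ}
    (h : Collinear ℝ ({a, b, c} : Set (ℝ × ℝ))) : cross a b c = 0 := by
  rw [collinear_iff_exists_forall_eq_smul_vadd] at h
  obtain ⟨p₀, v, hv⟩ := h
  obtain ⟨ra, ha⟩ := hv a (by simp)
  obtain ⟨rb, hb⟩ := hv b (by simp)
  obtain ⟨rc, hc⟩ := hv c (by simp)
  subst ha hb hc
  simp [cross, Prod.smul_fst, Prod.smul_snd, smul_eq_mul]
  ring

lemma collinear_of_cross {S : Set (ℝ × ℝ)} {a b : ℝ × ℝ}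
    (hab : a ≠ b) (h : ∀ x ∈ S, cross a b x = 0) : Collinear ℝ S := by
  rw [collinear_iff_exists_forall_eq_smul_vadd]
  refine ⟨a, b - a, fun x hx => ?_⟩
  obtain ⟨t, h1, h2⟩ := exists_param hab (h x hx)
  refine ⟨t, ?_⟩
  apply Prod.ext <;> simp [Prod.smul_fst, Prod.smul_snd, smul_eq_mul] <;> linarith

lemma pair_lemma (t0 u v : ℝ) (h : 0 ≤ (u - t0) * (v - t0)) (huv : u ≠ v) :
    ∃ p q : ℝ, ((p = u ∧ q = v) ∨ (p = v ∧ q = u)) ∧ p ≠ q ∧ (q - p) ^ 2 ≤ (q - t0) ^ 2 := by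
  rcases le_total ((u - t0) ^ 2) ((v - t0) ^ 2) with h' | h'
  · exact ⟨u, v, Or.inl ⟨rfl, rfl⟩, huv, by nlinarith⟩
  · exact ⟨v, u, Or.inr ⟨rfl, rfl⟩, huv.symm, by nlinarith⟩

lemma pigeon (t0 x y z : ℝ) (hxy : x ≠ y) (hxz : x ≠ z) (hyz : y ≠ z) :
    ∃ p q : ℝ, (p = x ∨ p = y ∨ p = z) ∧ (q = x ∨ q = y ∨ q = z) ∧ p ≠ q ∧
      (q - p) ^ 2 ≤ (q - t0) ^ 2 := by
  have key : 0 ≤ (x - t0) * (y - t0) ∨ 0 ≤ (x - t0) * (z - t0) ∨ 0 ≤ (y - t0) * (z - t0) := by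
    rcases le_total (x - t0) 0 with h1 | h1 <;> rcases le_total (y - t0) 0 with h2 | h2 <;>
      rcases le_total (z - t0) 0 with h3 | h3
    · exact Or.inl (by nlinarith)
    · exact Or.inl (by nlinarith)
    · exact Or.inr (Or.inl (by nlinarith))
    · exact Or.inr (Or.inr (by nlinarith))
    · exact Or.inr (Or.inr (by nlinarith))
    · exact Or.inr (Or.inl (by nlinarith))
    · exact Or.inl (by nlinarith)
    · exact Or.inl (by nlinarith)
  rcases key with h | h | h
  · obtain ⟨p, q, hpq, hne, hle⟩ := pair_lemma t0 x y h hxy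
    exact ⟨p, q, by tauto, by tauto, hne, hle⟩
  · obtain ⟨p, q, hpq, hne, hle⟩ := pair_lemma t0 x z h hxz
    exact ⟨p, q, by tauto, by tauto, hne, hle⟩
  · obtain ⟨p, q, hpq, hne, hle⟩ := pair_lemma t0 y z h hyz
    exact ⟨p, q, by tauto, by tauto, hne, hle⟩

lemma keyineq (u1 u2 w1 w2 p q : ℝ)
    (hD0 : u1 * w2 - u2 * w1 ≠ 0)
    (hq' : (u1 ^ 2 + u2 ^ 2) ^ 2 * (q - p) ^ 2 ≤ ((u1 ^ 2 + u2 ^ 2) * q - (w1 * u1 + w2 * u2)) ^ 2)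
    (hmin : (u1 * w2 - u2 * w1) ^ 2 * ((q * u1 - w1) ^ 2 + (q * u2 - w2) ^ 2) ≤
      (p - q) ^ 2 * (u1 * w2 - u2 * w1) ^ 2 * (u1 ^ 2 + u2 ^ 2)) : False := by
  have hD2 : 0 < (u1 * w2 - u2 * w1) ^ 2 :=
    lt_of_le_of_ne (sq_nonneg _) (Ne.symm (pow_ne_zero 2 hD0))
  have hn : 0 ≤ u1 ^ 2 + u2 ^ 2 := by positivity
  nlinarith [mul_le_mul_of_nonneg_left hmin hn,
    mul_le_mul_of_nonneg_left hq' hD2.le, sq_nonneg (u1 * w2 - u2 * w1)]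

/-- Sylvester–Gallai theorem. -/
theorem stmt1 (S : Set (ℝ × ℝ)) (hfin : S.Finite) (hS : ¬ Collinear ℝ S) :
    ∃ a ∈ S, ∃ b ∈ S, a ≠ b ∧
      ∀ c ∈ S, Collinear ℝ ({a, b, c} : Set (ℝ × ℝ)) → c = a ∨ c = b := by
  classical
  -- there is a noncollinear triple
  have hex : ∃ t : (ℝ × ℝ) × (ℝ × ℝ) × (ℝ × ℝ),
      t.1 ∈ S ∧ t.2.1 ∈ S ∧ t.2.2 ∈ S ∧ cross t.1 t.2.1 t.2.2 ≠ 0 := by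
    by_contra hc
    push_neg at hc
    apply hS
    rcases Set.subsingleton_or_nontrivial S with hsub | hnt
    · rcases hsub.eq_empty_or_singleton with rfl | ⟨a, rfl⟩
      · exact collinear_empty ℝ _
      · exact collinear_singleton ℝ a
    · obtain ⟨a, ha, b, hb, hab⟩ := hnt
      exact collinear_of_cross hab fun x hx => hc (a, b, x) ha hb hx
  set T : Set ((ℝ × ℝ) × (ℝ × ℝ) × (ℝ × ℝ)) :=
    {t | t.1 ∈ S ∧ t.2.1 ∈ S ∧ t.2.2 ∈ S ∧ cross t.1 t.2.1 t.2.2 ≠ 0} with hT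
  have hTfin : T.Finite := by
    apply (hfin.prod (hfin.prod hfin)).subset
    rintro ⟨a, b, c⟩ ⟨h1, h2, h3, -⟩
    exact ⟨h1, h2, h3⟩
  obtain ⟨⟨a, b, c⟩, ⟨haS, hbS, hcS, habc⟩, hmin⟩ :=
    Set.exists_min_image T (fun t => cross t.1 t.2.1 t.2.2 ^ 2 / d2 t.1 t.2.1) hTfin hex
  have hab : a ≠ b := cross_ne_zero_ne habc
  refine ⟨a, haS, b, hbS, hab, ?_⟩
  intro x hxS hcol
  by_contra hcon
  push_neg at hcon
  obtain ⟨hxa, hxb⟩ := hcon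
  -- cross-multiplied minimality
  have hmin' : ∀ y ∈ S, ∀ z ∈ S, ∀ w ∈ S, cross y z w ≠ 0 →
      cross a b c ^ 2 * d2 y z ≤ cross y z w ^ 2 * d2 a b := by
    intro y hy z hz w hw hne
    have h1 := hmin (y, z, w) ⟨hy, hz, hw, hne⟩
    have hd1 : 0 < d2 a b := d2_pos hab
    have hd2 : 0 < d2 y z := d2_pos (cross_ne_zero_ne hne)
    rw [div_le_div_iff₀ hd1 hd2] at h1
    exact h1
  -- set up coordinates
  have hx0 : cross a b x = 0 := cross_eq_zero_of_collinear hcol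
  obtain ⟨s, hs1, hs2⟩ := exists_param hab hx0
  have hn : (0 : ℝ) < (b.1 - a.1) ^ 2 + (b.2 - a.2) ^ 2 := d2_pos hab
  obtain ⟨n, hndef⟩ : ∃ n : ℝ, n = (b.1 - a.1) ^ 2 + (b.2 - a.2) ^ 2 := ⟨_, rfl⟩
  obtain ⟨m, hmdef⟩ : ∃ m : ℝ,
      m = (c.1 - a.1) * (b.1 - a.1) + (c.2 - a.2) * (b.2 - a.2) := ⟨_, rfl⟩
  rw [← hndef] at hn
  have hs0 : s ≠ 0 := by
    rintro rfl
    exact hxa (Prod.ext (by linarith) (by linarith))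
  have hs1' : s ≠ 1 := by
    rintro rfl
    exact hxb (Prod.ext (by linarith) (by linarith))
  obtain ⟨p, q, hp, hq, hpq, hineq⟩ := pigeon (m / n) 0 1 s (by norm_num) (Ne.symm hs0) (Ne.symm hs1')
  -- points corresponding to parameters
  have hptP : ∀ r : ℝ, (r = 0 ∨ r = 1 ∨ r = s) →
      (a.1 + r * (b.1 - a.1), a.2 + r * (b.2 - a.2)) ∈ S := by
    rintro r (rfl | rfl | hr)
    · simpa using haS
    · have : (a.1 + 1 * (b.1 - a.1), a.2 + 1 * (b.2 - a.2)) = b := by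
        apply Prod.ext <;> simp
      rwa [this]
    · rw [hr]
      have : (a.1 + s * (b.1 - a.1), a.2 + s * (b.2 - a.2)) = x := by
        apply Prod.ext <;> simp <;> linarith
      rwa [this]
  have hPS := hptP p hp
  have hQS := hptP q hq
  obtain ⟨P, hPdef⟩ : ∃ P : ℝ × ℝ, P = (a.1 + p * (b.1 - a.1), a.2 + p * (b.2 - a.2)) := ⟨_, rfl⟩
  obtain ⟨Q, hQdef⟩ : ∃ Q : ℝ × ℝ, Q = (a.1 + q * (b.1 - a.1), a.2 + q * (b.2 - a.2)) := ⟨_, rfl⟩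
  rw [← hPdef] at hPS
  rw [← hQdef] at hQS
  have hcrossQ : cross c Q P = (p - q) * cross a b c := by
    rw [hPdef, hQdef]
    simp only [cross]
    ring
  have hcne : cross c Q P ≠ 0 := by
    rw [hcrossQ]
    exact mul_ne_zero (sub_ne_zero.2 hpq) habc
  have hfinal := hmin' c hcS Q hQS P hPS hcne
  rw [hcrossQ] at hfinal
  -- massage and contradict
  have hineq' : n ^ 2 * (q - p) ^ 2 ≤ (n * q - m) ^ 2 := by
    have h1 : n * q - m = n * (q - m / n) := by field_simp
    calc n ^ 2 * (q - p) ^ 2 ≤ n ^ 2 * (q - m / n) ^ 2 := by nlinarith [sq_nonneg n]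
      _ = (n * (q - m / n)) ^ 2 := by ring
      _ = (n * q - m) ^ 2 := by rw [← h1]
  apply keyineq (b.1 - a.1) (b.2 - a.2) (c.1 - a.1) (c.2 - a.2) p q
  · exact habc
  · rw [← hndef, ← hmdef]
    exact hineq'
  · have e1 : d2 c Q = (q * (b.1 - a.1) - (c.1 - a.1)) ^ 2 + (q * (b.2 - a.2) - (c.2 - a.2)) ^ 2 := by
      rw [hQdef]
      simp only [d2]
      ring
    have e2 : d2 a b = (b.1 - a.1) ^ 2 + (b.2 - a.2) ^ 2 := rfl
    have e3 : cross a b c = (b.1 - a.1) * (c.2 - a.2) - (b.2 - a.2) * (c.1 - a.1) := rfl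
    rw [e1, e2, e3] at hfinal
    refine le_trans hfinal (le_of_eq ?_)
    ring
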